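/- Let q be a prime power, A ⊆ F_q, and let m, n, r be positive integers. Let X ∈ F_q^{m×r} and Y ∈ F_q^{r×n} be independent random matrices, each uniformly distributed over all matrices of its size. Then the variance of ct_A(XY) equals σ_A²(q,m,n,r) = mn(q^{-1}#A − q^{-r}γ_A(q))(1 − q^{-1}#A + q^{-r}γ_A(q)) + mn(m+n−2)q^{-r}(1−q^{-r})γ_A(q)². -/

import Mathlib

set_option linter.unusedSectionVars false
set_option maxHeartbeats 1000000


open scoped Classical BigOperators
open Filter

noncomputable section

/-- `ctA A M` is the number of entries of the matrix `M` that lie in `A`. -/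
def ctA {F : Type*} [Fintype F] {m n : ℕ} (A : Finset F)
    (M : Matrix (Fin m) (Fin n) F) : ℕ :=
  (Finset.univ.filter (fun p : Fin m × Fin n => M p.1 p.2 ∈ A)).card

/-- `γ_A(q) = q⁻¹ #A - 1_A(0)`. -/
def gammaA {F : Type*} [Fintype F] [Zero F] (A : Finset F) : ℝ :=
  (A.card : ℝ) / (Fintype.card F : ℝ) - (if (0 : F) ∈ A then 1 else 0)

/-- `μ_A(q,m,n,r) = mn (q⁻¹ #A - q^{-r} γ_A(q))`. -/
def muA {F : Type*} [Fintype F] [Zero F] (A : Finset F) (m n r : ℕ) : ℝ :=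
  (m : ℝ) * n *
    ((A.card : ℝ) / (Fintype.card F : ℝ) - ((Fintype.card F : ℝ))⁻¹ ^ r * gammaA A)

/-- `σ_A²(q,m,n,r)`. -/
def sigmaA2 {F : Type*} [Fintype F] [Zero F] (A : Finset F) (m n r : ℕ) : ℝ :=
  (m : ℝ) * n *
      ((A.card : ℝ) / (Fintype.card F : ℝ) - ((Fintype.card F : ℝ))⁻¹ ^ r * gammaA A) *
      (1 - (A.card : ℝ) / (Fintype.card F : ℝ) + ((Fintype.card F : ℝ))⁻¹ ^ r * gammaA A) +
    (m : ℝ) * n * ((m : ℝ) + (n : ℝ) - 2) * ((Fintype.card F : ℝ))⁻¹ ^ r *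
      (1 - ((Fintype.card F : ℝ))⁻¹ ^ r) * gammaA A ^ 2




-- marginalization: sum over functions of evaluation at one point
theorem sum_eval₁ {ι β : Type*} [Fintype ι] [DecidableEq ι] [Fintype β] (i : ι) (h : β → ℝ) :
    ∑ f : ι → β, h (f i) = (Fintype.card β : ℝ) ^ (Fintype.card ι - 1) * ∑ b, h b := by
  rw [← Equiv.sum_comp (Equiv.funSplitAt i β).symm (fun f => h (f i))]
  simp only [Equiv.funSplitAt_symm_apply, dif_pos rfl]
  rw [Fintype.sum_prod_type_right]
  simp [Finset.sum_const, Fintype.card_fun, Fintype.card_subtype_compl, mul_comm]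

theorem sum_eval₂ {ι β : Type*} [Fintype ι] [DecidableEq ι] [Fintype β] {i i' : ι}
    (hii : i' ≠ i) (h : β → β → ℝ) :
    ∑ f : ι → β, h (f i) (f i')
      = (Fintype.card β : ℝ) ^ (Fintype.card ι - 2) * ∑ b, ∑ b', h b b' := by
  rw [← Equiv.sum_comp (Equiv.funSplitAt i β).symm (fun f => h (f i) (f i'))]
  simp only [Equiv.funSplitAt_symm_apply, dif_pos rfl, dif_neg hii]
  rw [Fintype.sum_prod_type]
  simp only [dite_true]
  rw [Finset.sum_congr rfl (fun b _ => sum_eval₁ (⟨i', hii⟩ : { j // j ≠ i }) (h b))]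
  rw [← Finset.mul_sum]
  congr 2
  rw [Fintype.card_subtype_compl, Fintype.card_subtype_eq]
  omega

theorem sum_dot {F : Type*} [Field F] [Fintype F] {r : ℕ} {x : Fin r → F} (hx : x ≠ 0)
    (φ : F → ℝ) :
    ∑ z : Fin r → F, φ (dotProduct x z)
      = (Fintype.card F : ℝ) ^ (r - 1) * ∑ t, φ t := by
  obtain ⟨k, hk⟩ : ∃ k, x k ≠ 0 := Function.ne_iff.mp hx
  rw [← Equiv.sum_comp (Equiv.funSplitAt k F).symm (fun z => φ (dotProduct x z))]
  rw [Fintype.sum_prod_type_right]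
  have key : ∀ g : { j // j ≠ k } → F, ∀ t : F,
      dotProduct x ((Equiv.funSplitAt k F).symm (t, g))
        = x k * t + ∑ j : { j // j ≠ k }, x j * g j := by
    intro g t
    have hv : ∀ j, (Equiv.funSplitAt k F).symm (t, g) j
        = if h : j = k then t else g ⟨j, h⟩ := fun j => by
      simp [Equiv.funSplitAt, Equiv.piSplitAt]
    rw [dotProduct, ← Finset.add_sum_erase Finset.univ _ (Finset.mem_univ k)]
    congr 1
    · rw [hv k, dif_pos rfl]
    · rw [Finset.sum_subtype (Finset.univ.erase k)
        (p := fun j => j ≠ k) (fun j => by simp [Finset.mem_erase])]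
      exact Finset.sum_congr rfl fun j _ => by rw [hv j, dif_neg j.2]
  have inner : ∀ g : { j // j ≠ k } → F,
      ∑ t : F, φ (x k * t + ∑ j : { j // j ≠ k }, x j * g j) = ∑ t, φ t := by
    intro g
    exact Equiv.sum_comp ((Equiv.mulLeft₀ (x k) hk).trans
      (Equiv.addRight (∑ j : { j // j ≠ k }, x j * g j))) φ
  simp only [key, inner]
  rw [Finset.sum_const, nsmul_eq_mul]
  congr 1
  rw [Finset.card_univ, Fintype.card_fun, Fintype.card_subtype_compl, Fintype.card_subtype_eq, Fintype.card_fin]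
  push_cast [Nat.cast_pow]
  norm_num

/-- indicator of `A` as a real-valued function -/
def indA {F : Type*} (A : Finset F) [DecidableEq F] : F → ℝ := fun t => if t ∈ A then 1 else 0

section aux
variable {F : Type*} [Field F] [Fintype F] [DecidableEq F] (A : Finset F)

theorem sum_indA : ∑ t : F, indA A t = (A.card : ℝ) := by
  simp [indA, Finset.sum_ite_mem]

theorem sum_dot_pow (r p : ℕ) :
    ∑ x : Fin r → F, (∑ z : Fin r → F, indA A (dotProduct x z)) ^ p
      = ((Fintype.card F : ℝ) ^ r - 1) * ((Fintype.card F : ℝ) ^ (r - 1) * A.card) ^ p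
        + ((Fintype.card F : ℝ) ^ r * indA A 0) ^ p := by
  rw [← Finset.add_sum_erase Finset.univ _ (Finset.mem_univ (0 : Fin r → F))]
  have h0 : (∑ z : Fin r → F, indA A (dotProduct (0 : Fin r → F) z)) ^ p
      = ((Fintype.card F : ℝ) ^ r * indA A 0) ^ p := by
    simp [zero_dotProduct, Finset.sum_const, Fintype.card_fun]
  have h1 : ∀ x ∈ Finset.univ.erase (0 : Fin r → F),
      (∑ z : Fin r → F, indA A (dotProduct x z)) ^ p
        = ((Fintype.card F : ℝ) ^ (r - 1) * A.card) ^ p := by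
    intro x hx
    rw [sum_dot (Finset.ne_of_mem_erase hx) (indA A), sum_indA]
  rw [Finset.sum_congr rfl h1, Finset.sum_const, nsmul_eq_mul]
  rw [add_comm, Finset.card_erase_of_mem (Finset.mem_univ _), Finset.card_univ]
  congr 2
  rw [Fintype.card_fun, Fintype.card_fin]
  have : (1:ℕ) ≤ Fintype.card F ^ r := Nat.one_le_pow _ _ Fintype.card_pos
  push_cast [Nat.cast_sub this]
  ring

end aux

section Tlemmas
variable {F : Type*} [Field F] [Fintype F] [DecidableEq F] (A : Finset F) {m n r : ℕ}

/-- `Dsum A r p` = ∑_x (∑_z ind(x·z))^p -/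
def Dsum {F : Type*} [Field F] [Fintype F] [DecidableEq F] (A : Finset F) (r p : ℕ) : ℝ :=
  ∑ x : Fin r → F, (∑ z : Fin r → F, indA A (dotProduct x z)) ^ p

theorem indA_mul_self (t : F) : indA A t * indA A t = indA A t := by
  unfold indA; split_ifs <;> ring

theorem T_diag (i : Fin m) (j : Fin n) :
    ∑ X : Fin m → Fin r → F, ∑ W : Fin n → Fin r → F,
        indA A (dotProduct (X i) (W j)) * indA A (dotProduct (X i) (W j))
      = (Fintype.card (Fin r → F) : ℝ) ^ (m - 1)
        * ((Fintype.card (Fin r → F) : ℝ) ^ (n - 1) * Dsum A r 1) := by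
  simp only [indA_mul_self]
  rw [sum_eval₁ i (fun x => ∑ W : Fin n → Fin r → F, indA A (dotProduct x (W j)))]
  rw [Fintype.card_fin]
  congr 1
  rw [Finset.sum_congr rfl (fun x _ =>
    sum_eval₁ j (fun w => indA A (dotProduct x w)))]
  rw [← Finset.mul_sum, Fintype.card_fin]
  simp [Dsum]

theorem T_row (i : Fin m) {j j' : Fin n} (hj : j' ≠ j) :
    ∑ X : Fin m → Fin r → F, ∑ W : Fin n → Fin r → F,
        indA A (dotProduct (X i) (W j)) * indA A (dotProduct (X i) (W j'))
      = (Fintype.card (Fin r → F) : ℝ) ^ (m - 1)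
        * ((Fintype.card (Fin r → F) : ℝ) ^ (n - 2) * Dsum A r 2) := by
  rw [sum_eval₁ i (fun x => ∑ W : Fin n → Fin r → F,
    indA A (dotProduct x (W j)) * indA A (dotProduct x (W j')))]
  rw [Fintype.card_fin]
  congr 1
  rw [Finset.sum_congr rfl (fun x _ => sum_eval₂ hj
    (fun w w' => indA A (dotProduct x w) * indA A (dotProduct x w')))]
  rw [← Finset.mul_sum, Fintype.card_fin]
  congr 1
  unfold Dsum
  refine Finset.sum_congr rfl (fun x _ => ?_)
  rw [sq, Fintype.sum_mul_sum]

theorem T_col {i i' : Fin m} (hi : i' ≠ i) (j : Fin n) :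
    ∑ X : Fin m → Fin r → F, ∑ W : Fin n → Fin r → F,
        indA A (dotProduct (X i) (W j)) * indA A (dotProduct (X i') (W j))
      = (Fintype.card (Fin r → F) : ℝ) ^ (m - 2)
        * ((Fintype.card (Fin r → F) : ℝ) ^ (n - 1) * Dsum A r 2) := by
  rw [sum_eval₂ hi (fun x x' => ∑ W : Fin n → Fin r → F,
    indA A (dotProduct x (W j)) * indA A (dotProduct x' (W j)))]
  rw [Fintype.card_fin]
  congr 1
  have step1 : ∀ x x' : Fin r → F, ∑ W : Fin n → Fin r → F,
      indA A (dotProduct x (W j)) * indA A (dotProduct x' (W j))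
        = (Fintype.card (Fin r → F) : ℝ) ^ (n - 1)
          * ∑ z : Fin r → F, indA A (dotProduct x z) * indA A (dotProduct x' z) :=
    fun x x' => by
      rw [sum_eval₁ j (fun w => indA A (dotProduct x w) * indA A (dotProduct x' w)),
        Fintype.card_fin]
  simp only [step1]
  simp only [← Finset.mul_sum]
  congr 1
  rw [Finset.sum_congr rfl (fun (x : Fin r → F) (_ : x ∈ Finset.univ) =>
    (Finset.sum_comm :
      (∑ x' : Fin r → F, ∑ z : Fin r → F,
        indA A (dotProduct x z) * indA A (dotProduct x' z))
      = ∑ z : Fin r → F, ∑ x' : Fin r → F,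
        indA A (dotProduct x z) * indA A (dotProduct x' z))),
    Finset.sum_comm]
  unfold Dsum
  refine Finset.sum_congr rfl (fun z _ => ?_)
  rw [sq, Fintype.sum_mul_sum]
  exact Finset.sum_congr rfl fun x _ => Finset.sum_congr rfl fun x' _ => by
    rw [dotProduct_comm z x, dotProduct_comm z x']

theorem T_off {i i' : Fin m} (hi : i' ≠ i) {j j' : Fin n} (hj : j' ≠ j) :
    ∑ X : Fin m → Fin r → F, ∑ W : Fin n → Fin r → F,
        indA A (dotProduct (X i) (W j)) * indA A (dotProduct (X i') (W j'))
      = (Fintype.card (Fin r → F) : ℝ) ^ (m - 2)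
        * ((Fintype.card (Fin r → F) : ℝ) ^ (n - 2) * Dsum A r 1 ^ 2) := by
  rw [sum_eval₂ hi (fun x x' => ∑ W : Fin n → Fin r → F,
    indA A (dotProduct x (W j)) * indA A (dotProduct x' (W j')))]
  rw [Fintype.card_fin]
  congr 1
  have step1 : ∀ x x' : Fin r → F, ∑ W : Fin n → Fin r → F,
      indA A (dotProduct x (W j)) * indA A (dotProduct x' (W j'))
        = (Fintype.card (Fin r → F) : ℝ) ^ (n - 2)
          * ∑ z : Fin r → F, ∑ z' : Fin r → F,
              indA A (dotProduct x z) * indA A (dotProduct x' z') :=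
    fun x x' => by
      rw [sum_eval₂ hj
        (fun w w' => indA A (dotProduct x w) * indA A (dotProduct x' w')),
        Fintype.card_fin]
  simp only [step1]
  simp only [← Finset.mul_sum]
  congr 1
  simp only [Dsum, pow_one]
  rw [sq, Fintype.sum_mul_sum]
  refine Finset.sum_congr rfl fun x _ => Finset.sum_congr rfl fun x' _ => ?_
  rw [Fintype.sum_mul_sum]
  simp [Finset.mul_sum]

end Tlemmas

section Main
variable {F : Type*} [Field F] [Fintype F] [DecidableEq F] (A : Finset F) {m n r : ℕ}

theorem T_single (i : Fin m) (j : Fin n) :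
    ∑ X : Fin m → Fin r → F, ∑ W : Fin n → Fin r → F,
        indA A (dotProduct (X i) (W j))
      = (Fintype.card (Fin r → F) : ℝ) ^ (m - 1)
        * ((Fintype.card (Fin r → F) : ℝ) ^ (n - 1) * Dsum A r 1) := by
  have := T_diag A (r := r) i j
  simpa only [indA_mul_self] using this

theorem sum_sum_sum_comm {α β γ : Type*} [Fintype α] [Fintype β] [Fintype γ]
    (f : α → β → γ → ℝ) :
    ∑ a, ∑ b, ∑ c, f a b c = ∑ c, ∑ a, ∑ b, f a b c := by
  calc ∑ a, ∑ b, ∑ c, f a b c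
      = ∑ a, ∑ c, ∑ b, f a b c :=
        Finset.sum_congr rfl fun a _ => Finset.sum_comm
    _ = ∑ c, ∑ a, ∑ b, f a b c := Finset.sum_comm

/-- transport between pairs of pi-type "matrices" and genuine matrix pairs -/
def prodEquiv (F : Type*) (m n r : ℕ) :
    ((Fin m → Fin r → F) × (Fin n → Fin r → F))
      ≃ (Matrix (Fin m) (Fin r) F × Matrix (Fin r) (Fin n) F) :=
  Equiv.prodCongr Matrix.of ((Equiv.piComm fun _ _ => F).trans Matrix.of)

theorem prodEquiv_entry (X : Fin m → Fin r → F) (W : Fin n → Fin r → F)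
    (i : Fin m) (j : Fin n) :
    (((prodEquiv F m n r) (X, W)).1 * ((prodEquiv F m n r) (X, W)).2) i j
      = dotProduct (X i) (W j) := by
  show (Matrix.of X * Matrix.of (fun k j => W j k)) i j = _
  rw [Matrix.mul_apply]
  rfl

theorem Dsum_eq (r p : ℕ) :
    Dsum A r p
      = ((Fintype.card F : ℝ) ^ r - 1) * ((Fintype.card F : ℝ) ^ (r - 1) * A.card) ^ p
        + ((Fintype.card F : ℝ) ^ r * indA A 0) ^ p :=
  sum_dot_pow A r p

theorem sum_matrix_pairs (G : Matrix (Fin m) (Fin r) F × Matrix (Fin r) (Fin n) F → ℝ) :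
    ∑ P, G P = ∑ X : Fin m → Fin r → F, ∑ W : Fin n → Fin r → F,
      G ((prodEquiv F m n r) (X, W)) := by
  rw [← Equiv.sum_comp (prodEquiv F m n r) G, Fintype.sum_prod_type]

theorem ctA_cast (X : Fin m → Fin r → F) (W : Fin n → Fin r → F) :
    (ctA A (((prodEquiv F m n r) (X, W)).1 * ((prodEquiv F m n r) (X, W)).2) : ℝ)
      = ∑ p : Fin m × Fin n, indA A (dotProduct (X p.1) (W p.2)) := by
  rw [ctA, Finset.card_filter]
  push_cast
  refine Finset.sum_congr rfl fun p _ => ?_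
  simp [indA, prodEquiv_entry X W p.1 p.2]

end Main


/-- Lemma 3.1(2): the variance of `ct_A(XY)` for independent uniform `X ∈ F^{m×r}`,
`Y ∈ F^{r×n}` equals `σ_A²(q,m,n,r)`. -/
theorem variance_ctA_prod
    {F : Type*} [Field F] [Fintype F] (A : Finset F) (m n r : ℕ)
    (hm : 0 < m) (hn : 0 < n) (hr : 0 < r) :
    (∑ P : Matrix (Fin m) (Fin r) F × Matrix (Fin r) (Fin n) F,
        (ctA A (P.1 * P.2) : ℝ) ^ 2) /
      (Fintype.card (Matrix (Fin m) (Fin r) F × Matrix (Fin r) (Fin n) F) : ℝ) -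
    ((∑ P : Matrix (Fin m) (Fin r) F × Matrix (Fin r) (Fin n) F,
        (ctA A (P.1 * P.2) : ℝ)) /
      (Fintype.card (Matrix (Fin m) (Fin r) F × Matrix (Fin r) (Fin n) F) : ℝ)) ^ 2 =
    sigmaA2 A m n r := by
  haveI : DecidableEq F := Classical.decEq F
  obtain ⟨m₀, rfl⟩ : ∃ k, m = k + 1 := ⟨m - 1, by omega⟩
  obtain ⟨n₀, rfl⟩ : ∃ k, n = k + 1 := ⟨n - 1, by omega⟩
  obtain ⟨s, rfl⟩ : ∃ k, r = k + 1 := ⟨r - 1, by omega⟩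
  clear hm hn hr
  set c : ℝ := (Fintype.card F : ℝ) with hc
  have hc0 : (0:ℝ) < c := by
    rw [hc]; exact_mod_cast Fintype.card_pos
  set Q : ℝ := (Fintype.card (Fin (s+1) → F) : ℝ) with hQ
  have hQc : Q = c ^ (s+1) := by
    rw [hQ, hc]
    norm_num [Fintype.card_fun]
  have hQ0 : Q ≠ 0 := by rw [hQc]; positivity
  -- cardinality of the sample space
  have hD : (Fintype.card
      (Matrix (Fin (m₀+1)) (Fin (s+1)) F × Matrix (Fin (s+1)) (Fin (n₀+1)) F) : ℝ)
      = Q^(m₀+1) * Q^(n₀+1) := by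
    rw [Fintype.card_prod]
    have e1 : Fintype.card (Matrix (Fin (m₀+1)) (Fin (s+1)) F)
        = Fintype.card (Fin (s+1) → F) ^ (m₀+1) := by
      rw [Fintype.card_congr (Matrix.of (m := Fin (m₀+1)) (n := Fin (s+1)) (α := F)).symm,
        Fintype.card_fun, Fintype.card_fin]
    have e2 : Fintype.card (Matrix (Fin (s+1)) (Fin (n₀+1)) F)
        = Fintype.card (Fin (s+1) → F) ^ (n₀+1) := by
      rw [Fintype.card_congr
        (((Equiv.piComm fun (_ : Fin (n₀+1)) (_ : Fin (s+1)) => F).trans Matrix.of).symm),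
        Fintype.card_fun, Fintype.card_fin]
    rw [e1, e2, hQ]
    push_cast
    ring
  -- first moment
  have hS1 : (∑ P : Matrix (Fin (m₀+1)) (Fin (s+1)) F × Matrix (Fin (s+1)) (Fin (n₀+1)) F,
      (ctA A (P.1 * P.2) : ℝ))
      = ((m₀+1 : ℝ) * (n₀+1 : ℝ)) * (Q ^ m₀ * (Q ^ n₀ * Dsum A (s+1) 1)) := by
    rw [sum_matrix_pairs (fun P => (ctA A (P.1 * P.2) : ℝ))]
    simp only [ctA_cast A]
    rw [sum_sum_sum_comm (fun (X : Fin (m₀+1) → Fin (s+1) → F)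
      (W : Fin (n₀+1) → Fin (s+1) → F) (p : Fin (m₀+1) × Fin (n₀+1)) =>
      indA A (dotProduct (X p.1) (W p.2)))]
    rw [Finset.sum_congr rfl (fun (p : Fin (m₀+1) × Fin (n₀+1)) _ => T_single A p.1 p.2)]
    rw [Finset.sum_const, Finset.card_univ, nsmul_eq_mul, ← hQ]
    rw [Fintype.card_prod, Fintype.card_fin, Fintype.card_fin]
    push_cast
    ring
  -- the four pair-correlation values
  have diagv : ∀ (i : Fin (m₀+1)) (j : Fin (n₀+1)),
      (∑ X : Fin (m₀+1) → Fin (s+1) → F, ∑ W : Fin (n₀+1) → Fin (s+1) → F,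
        indA A (dotProduct (X i) (W j)) * indA A (dotProduct (X i) (W j)))
      = Q ^ m₀ * (Q ^ n₀ * Dsum A (s+1) 1) := by
    intro i j
    rw [T_diag A i j, ← hQ]
    rfl
  have rowv : ∀ (i : Fin (m₀+1)) (j j' : Fin (n₀+1)), j' ≠ j →
      (∑ X : Fin (m₀+1) → Fin (s+1) → F, ∑ W : Fin (n₀+1) → Fin (s+1) → F,
        indA A (dotProduct (X i) (W j)) * indA A (dotProduct (X i) (W j')))
      = Q ^ m₀ * (Q ^ (n₀-1) * Dsum A (s+1) 2) := by
    intro i j j' hj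
    rw [T_row A i hj, ← hQ]
    rfl
  have colv : ∀ (i i' : Fin (m₀+1)) (j : Fin (n₀+1)), i' ≠ i →
      (∑ X : Fin (m₀+1) → Fin (s+1) → F, ∑ W : Fin (n₀+1) → Fin (s+1) → F,
        indA A (dotProduct (X i) (W j)) * indA A (dotProduct (X i') (W j)))
      = Q ^ (m₀-1) * (Q ^ n₀ * Dsum A (s+1) 2) := by
    intro i i' j hi
    rw [T_col A hi j, ← hQ]
    rfl
  have offv : ∀ (i i' : Fin (m₀+1)) (j j' : Fin (n₀+1)), i' ≠ i → j' ≠ j →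
      (∑ X : Fin (m₀+1) → Fin (s+1) → F, ∑ W : Fin (n₀+1) → Fin (s+1) → F,
        indA A (dotProduct (X i) (W j)) * indA A (dotProduct (X i') (W j')))
      = Q ^ (m₀-1) * (Q ^ (n₀-1) * (Dsum A (s+1) 1) ^ 2) := by
    intro i i' j j' hi hj
    rw [T_off A hi hj, ← hQ]
    rfl
  -- collapsing the sum over the second index pair
  have inner : ∀ p : Fin (m₀+1) × Fin (n₀+1),
      (∑ p' : Fin (m₀+1) × Fin (n₀+1),
        ∑ X : Fin (m₀+1) → Fin (s+1) → F, ∑ W : Fin (n₀+1) → Fin (s+1) → F,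
          indA A (dotProduct (X p.1) (W p.2))
            * indA A (dotProduct (X p'.1) (W p'.2)))
      = Q ^ m₀ * (Q ^ n₀ * Dsum A (s+1) 1)
        + (n₀ : ℝ) * (Q ^ m₀ * (Q ^ (n₀-1) * Dsum A (s+1) 2))
        + (m₀ : ℝ) * (Q ^ (m₀-1) * (Q ^ n₀ * Dsum A (s+1) 2)
            + (n₀ : ℝ) * (Q ^ (m₀-1) * (Q ^ (n₀-1) * (Dsum A (s+1) 1) ^ 2))) := by
    intro p
    rw [Fintype.sum_prod_type]
    rw [← Finset.add_sum_erase Finset.univ _ (Finset.mem_univ p.1)]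
    have hcard_m : ((Finset.univ.erase p.1).card : ℝ) = (m₀ : ℝ) := by
      rw [Finset.card_erase_of_mem (Finset.mem_univ _), Finset.card_univ, Fintype.card_fin]
      norm_num
    have hcard_n : ((Finset.univ.erase p.2).card : ℝ) = (n₀ : ℝ) := by
      rw [Finset.card_erase_of_mem (Finset.mem_univ _), Finset.card_univ, Fintype.card_fin]
      norm_num
    have h1 : (∑ j' : Fin (n₀+1),
        ∑ X : Fin (m₀+1) → Fin (s+1) → F, ∑ W : Fin (n₀+1) → Fin (s+1) → F,
          indA A (dotProduct (X p.1) (W p.2))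
            * indA A (dotProduct (X p.1) (W j')))
        = Q ^ m₀ * (Q ^ n₀ * Dsum A (s+1) 1)
          + (n₀ : ℝ) * (Q ^ m₀ * (Q ^ (n₀-1) * Dsum A (s+1) 2)) := by
      rw [← Finset.add_sum_erase Finset.univ _ (Finset.mem_univ p.2)]
      congr 1
      · exact diagv p.1 p.2
      · rw [Finset.sum_congr rfl (fun j' hj' =>
          rowv p.1 p.2 j' (Finset.ne_of_mem_erase hj')),
          Finset.sum_const, nsmul_eq_mul, hcard_n]
    have h2 : ∀ i' ∈ Finset.univ.erase p.1,
        (∑ j' : Fin (n₀+1),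
          ∑ X : Fin (m₀+1) → Fin (s+1) → F, ∑ W : Fin (n₀+1) → Fin (s+1) → F,
            indA A (dotProduct (X p.1) (W p.2))
              * indA A (dotProduct (X i') (W j')))
        = Q ^ (m₀-1) * (Q ^ n₀ * Dsum A (s+1) 2)
          + (n₀ : ℝ) * (Q ^ (m₀-1) * (Q ^ (n₀-1) * (Dsum A (s+1) 1) ^ 2)) := by
      intro i' hi'
      rw [← Finset.add_sum_erase Finset.univ _ (Finset.mem_univ p.2)]
      congr 1
      · exact colv p.1 i' p.2 (Finset.ne_of_mem_erase hi')
      · rw [Finset.sum_congr rfl (fun j' hj' =>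
          offv p.1 i' p.2 j' (Finset.ne_of_mem_erase hi') (Finset.ne_of_mem_erase hj')),
          Finset.sum_const, nsmul_eq_mul, hcard_n]
    rw [h1, Finset.sum_congr rfl h2, Finset.sum_const, nsmul_eq_mul, hcard_m]
  -- second moment
  have hS2 : (∑ P : Matrix (Fin (m₀+1)) (Fin (s+1)) F × Matrix (Fin (s+1)) (Fin (n₀+1)) F,
      (ctA A (P.1 * P.2) : ℝ) ^ 2)
      = ((m₀+1 : ℝ) * (n₀+1 : ℝ)) *
        (Q ^ m₀ * (Q ^ n₀ * Dsum A (s+1) 1)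
          + (n₀ : ℝ) * (Q ^ m₀ * (Q ^ (n₀-1) * Dsum A (s+1) 2))
          + (m₀ : ℝ) * (Q ^ (m₀-1) * (Q ^ n₀ * Dsum A (s+1) 2)
              + (n₀ : ℝ) * (Q ^ (m₀-1) * (Q ^ (n₀-1) * (Dsum A (s+1) 1) ^ 2)))) := by
    rw [sum_matrix_pairs (fun P => (ctA A (P.1 * P.2) : ℝ) ^ 2)]
    simp only [ctA_cast A]
    have key2 : ∀ (X : Fin (m₀+1) → Fin (s+1) → F) (W : Fin (n₀+1) → Fin (s+1) → F),
        (∑ p : Fin (m₀+1) × Fin (n₀+1), indA A (dotProduct (X p.1) (W p.2))) ^ 2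
        = ∑ pq : (Fin (m₀+1) × Fin (n₀+1)) × (Fin (m₀+1) × Fin (n₀+1)),
            indA A (dotProduct (X pq.1.1) (W pq.1.2))
              * indA A (dotProduct (X pq.2.1) (W pq.2.2)) := by
      intro X W
      rw [sq, Fintype.sum_mul_sum]
      exact (Fintype.sum_prod_type (f := fun pq :
        (Fin (m₀+1) × Fin (n₀+1)) × (Fin (m₀+1) × Fin (n₀+1)) =>
        indA A (dotProduct (X pq.1.1) (W pq.1.2))
          * indA A (dotProduct (X pq.2.1) (W pq.2.2)))).symm
    simp only [key2]
    rw [sum_sum_sum_comm (fun (X : Fin (m₀+1) → Fin (s+1) → F)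
      (W : Fin (n₀+1) → Fin (s+1) → F)
      (pq : (Fin (m₀+1) × Fin (n₀+1)) × (Fin (m₀+1) × Fin (n₀+1))) =>
      indA A (dotProduct (X pq.1.1) (W pq.1.2))
        * indA A (dotProduct (X pq.2.1) (W pq.2.2)))]
    rw [Fintype.sum_prod_type]
    rw [Finset.sum_congr rfl (fun (p : Fin (m₀+1) × Fin (n₀+1)) _ => inner p)]
    rw [Finset.sum_const, Finset.card_univ, Fintype.card_prod, Fintype.card_fin,
      Fintype.card_fin, nsmul_eq_mul]
    push_cast
    ring
  -- closed forms for the one- and two-point counts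
  have hD1 : Dsum A (s+1) 1
      = (c^(s+1) - 1) * (c^s * (A.card : ℝ)) + c^(s+1) * indA A 0 := by
    rw [Dsum_eq, ← hc]
    norm_num
  have hD2 : Dsum A (s+1) 2
      = (c^(s+1) - 1) * (c^s * (A.card : ℝ))^2 + (c^(s+1))^2 * (indA A 0)^2 := by
    rw [Dsum_eq, ← hc]
    norm_num [mul_pow]
  rw [hD, hS1, hS2, hD1, hD2]
  simp only [sigmaA2, gammaA, indA]
  rw [← hc, hQc]
  push_cast
  by_cases h0 : (0:F) ∈ A <;>
    simp only [h0, if_true, if_false] <;>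
    rcases m₀ with _ | k <;>
    rcases n₀ with _ | l <;>
    simp only [Nat.add_sub_cancel, Nat.zero_sub, pow_zero, Nat.cast_zero, Nat.cast_add,
      Nat.cast_one] <;>
    push_cast <;>
    simp only [inv_pow] <;>
    field_simp <;>
    ring





end
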